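/- Let Ω ⊆ ℝ³ be a bounded open set and let ℓ, ψ, θ : Ω → ℝ be twice continuously differentiable functions forming an orthogonal coordinate system on Ω, i.e. ∇ℓ · ∇ψ = ∇ℓ · ∇θ = ∇ψ · ∇θ = 0 and the Jacobian h = ∇ℓ · (∇ψ × ∇θ) is nonvanishing on Ω. Assume |∇ℓ| = |∇ψ| on Ω and |∇θ| = |α| on Ω for a continuous function α : Ω → ℝ. Then the vector field w* = sin θ ∇ψ + cos θ ∇ℓ satisfies curl w* = −σ|α| w* on Ω, where σ(x) = h(x)/|h(x)| is the sign of the Jacobian; in particular w* is a Beltrami field in Ω. -/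

import Mathlib

noncomputable section

abbrev R3 : Type := Fin 3 → ℝ

/-- Euclidean dot product on ℝ³. -/
def dot3 (u v : R3) : ℝ := u 0 * v 0 + u 1 * v 1 + u 2 * v 2

/-- Cross product on ℝ³. -/
def cross3 (u v : R3) : R3 :=
  ![u 1 * v 2 - u 2 * v 1, u 2 * v 0 - u 0 * v 2, u 0 * v 1 - u 1 * v 0]

/-- Euclidean norm on ℝ³. -/
def norm3 (u : R3) : ℝ := Real.sqrt (dot3 u u)

/-- Partial derivative of a scalar field in the `i`-th coordinate direction. -/
def pd (i : Fin 3) (f : R3 → ℝ) (x : R3) : ℝ := fderiv ℝ f x (Pi.single i 1)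

/-- Gradient of a scalar field. -/
def grad3 (f : R3 → ℝ) (x : R3) : R3 := fun i => pd i f x

/-- Curl of a vector field. -/
def curl3 (w : R3 → R3) (x : R3) : R3 :=
  ![pd 1 (fun y => w y 2) x - pd 2 (fun y => w y 1) x,
    pd 2 (fun y => w y 0) x - pd 0 (fun y => w y 2) x,
    pd 0 (fun y => w y 1) x - pd 1 (fun y => w y 0) x]

/-- Divergence of a vector field. -/
def div3 (w : R3 → R3) (x : R3) : ℝ :=
  pd 0 (fun y => w y 0) x + pd 1 (fun y => w y 1) x + pd 2 (fun y => w y 2) x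

/-- Laplacian of a scalar field. -/
def lap3 (f : R3 → ℝ) (x : R3) : ℝ := div3 (grad3 f) x

lemma para3 (a b c : R3) (hab : dot3 a b = 0) (hac : dot3 a c = 0) (i : Fin 3) :
    dot3 a a * cross3 b c i = dot3 a (cross3 b c) * a i := by
  simp only [dot3] at hab hac
  fin_cases i <;> simp [dot3, cross3] <;>
  [ linear_combination (a 1 * c 2 - a 2 * c 1) * hab - (a 1 * b 2 - a 2 * b 1) * hac;
    linear_combination (a 2 * c 0 - a 0 * c 2) * hab - (a 2 * b 0 - a 0 * b 2) * hac;
    linear_combination (a 0 * c 1 - a 1 * c 0) * hab - (a 0 * b 1 - a 1 * b 0) * hac ]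

lemma detcyc3 (a b c : R3) : dot3 b (cross3 c a) = dot3 a (cross3 b c) := by
  simp [dot3, cross3]; ring

lemma lagrange3 (b c : R3) :
    dot3 (cross3 b c) (cross3 b c) = dot3 b b * dot3 c c - (dot3 b c) ^ 2 := by
  simp [dot3, cross3]; ring

lemma dot3_nonneg (u : R3) : 0 ≤ dot3 u u := by
  simp only [dot3]
  nlinarith [mul_self_nonneg (u 0), mul_self_nonneg (u 1), mul_self_nonneg (u 2)]

lemma dot3_eq_zero {u : R3} (h : dot3 u u = 0) (i : Fin 3) : u i = 0 := by
  simp only [dot3] at h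
  fin_cases i
  · show u 0 = 0
    nlinarith [mul_self_nonneg (u 0), mul_self_nonneg (u 1), mul_self_nonneg (u 2)]
  · show u 1 = 0
    nlinarith [mul_self_nonneg (u 0), mul_self_nonneg (u 1), mul_self_nonneg (u 2)]
  · show u 2 = 0
    nlinarith [mul_self_nonneg (u 0), mul_self_nonneg (u 1), mul_self_nonneg (u 2)]

lemma sqkey (A Hh : ℝ) (v w : R3) (e : ∀ i, A * v i = Hh * w i) :
    A ^ 2 * dot3 v v = Hh ^ 2 * dot3 w w := by
  have e0 := e 0; have e1 := e 1; have e2 := e 2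
  simp only [dot3]
  linear_combination (A * v 0 + Hh * w 0) * e0 + (A * v 1 + Hh * w 1) * e1
    + (A * v 2 + Hh * w 2) * e2

lemma hasFDerivAt_pd {f : R3 → ℝ} {x : R3} (hf : ContDiffAt ℝ 2 f x) (k : Fin 3) :
    HasFDerivAt (fun y => pd k f y)
      ((ContinuousLinearMap.apply ℝ ℝ (Pi.single k 1 : R3)).comp (fderiv ℝ (fderiv ℝ f) x)) x := by
  have h1 : DifferentiableAt ℝ (fderiv ℝ f) x :=
    (hf.fderiv_right (m := 1) (by norm_num)).differentiableAt one_ne_zero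
  exact ((ContinuousLinearMap.apply ℝ ℝ (Pi.single k 1 : R3)).hasFDerivAt).comp x h1.hasFDerivAt

lemma pd_symm {f : R3 → ℝ} {x : R3} (hf : ContDiffAt ℝ 2 f x) (i k : Fin 3) :
    fderiv ℝ (fderiv ℝ f) x (Pi.single i 1) (Pi.single k 1)
      = fderiv ℝ (fderiv ℝ f) x (Pi.single k 1) (Pi.single i 1) :=
  (hf.isSymmSndFDerivAt (by simp)) _ _

lemma pd_eventuallyEq {f g : R3 → ℝ} {x : R3} (h : f =ᶠ[nhds x] g) (i : Fin 3) :
    pd i f x = pd i g x := by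
  unfold pd; rw [Filter.EventuallyEq.fderiv_eq h]

lemma pdw {ℓ ψ θ : R3 → ℝ} {x : R3} (hℓ : ContDiffAt ℝ 2 ℓ x) (hψ : ContDiffAt ℝ 2 ψ x)
    (hθ : ContDiffAt ℝ 2 θ x) (i k : Fin 3) :
    pd i (fun y => Real.sin (θ y) * pd k ψ y + Real.cos (θ y) * pd k ℓ y) x =
      Real.sin (θ x) * fderiv ℝ (fderiv ℝ ψ) x (Pi.single i 1) (Pi.single k 1)
      + pd k ψ x * (Real.cos (θ x) * pd i θ x)
      + Real.cos (θ x) * fderiv ℝ (fderiv ℝ ℓ) x (Pi.single i 1) (Pi.single k 1)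
      + pd k ℓ x * (-Real.sin (θ x) * pd i θ x) := by
  have hθ' : HasFDerivAt θ (fderiv ℝ θ x) x := (hθ.differentiableAt two_ne_zero).hasFDerivAt
  have h3 := (hθ'.sin.mul (hasFDerivAt_pd hψ k)).add (hθ'.cos.mul (hasFDerivAt_pd hℓ k))
  show fderiv ℝ (fun y => Real.sin (θ y) * pd k ψ y + Real.cos (θ y) * pd k ℓ y) x
        (Pi.single i 1) = _
  rw [HasFDerivAt.fderiv (f := fun y => Real.sin (θ y) * pd k ψ y + Real.cos (θ y) * pd k ℓ y) h3]
  simp only [ContinuousLinearMap.add_apply, ContinuousLinearMap.smul_apply,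
    ContinuousLinearMap.coe_comp', Function.comp_apply, ContinuousLinearMap.apply_apply,
    smul_eq_mul, ContinuousLinearMap.coe_smul', Pi.smul_apply, ContinuousLinearMap.neg_apply]
  unfold pd
  ring

/-- Construction of Beltrami fields from an orthogonal coordinate system:
the field `w* = sin θ ∇ψ + cos θ ∇ℓ`. -/
theorem beltrami_construction_star
    (Ω : Set R3) (hΩopen : IsOpen Ω) (hΩbdd : Bornology.IsBounded Ω)
    (ℓ ψ θ α : R3 → ℝ)
    (hℓ : ContDiffOn ℝ 2 ℓ Ω) (hψ : ContDiffOn ℝ 2 ψ Ω) (hθ : ContDiffOn ℝ 2 θ Ω)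
    (hα : ContinuousOn α Ω)
    (horth1 : ∀ x ∈ Ω, dot3 (grad3 ℓ x) (grad3 ψ x) = 0)
    (horth2 : ∀ x ∈ Ω, dot3 (grad3 ℓ x) (grad3 θ x) = 0)
    (horth3 : ∀ x ∈ Ω, dot3 (grad3 ψ x) (grad3 θ x) = 0)
    (hjac : ∀ x ∈ Ω, dot3 (grad3 ℓ x) (cross3 (grad3 ψ x) (grad3 θ x)) ≠ 0)
    (hnorm : ∀ x ∈ Ω, norm3 (grad3 ℓ x) = norm3 (grad3 ψ x))
    (heik : ∀ x ∈ Ω, norm3 (grad3 θ x) = |α x|)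
    (wstar : R3 → R3)
    (hwstar : ∀ x ∈ Ω, wstar x = Real.sin (θ x) • grad3 ψ x + Real.cos (θ x) • grad3 ℓ x) :
    ∀ x ∈ Ω,
      curl3 wstar x =
        (-((dot3 (grad3 ℓ x) (cross3 (grad3 ψ x) (grad3 θ x)) /
            |dot3 (grad3 ℓ x) (cross3 (grad3 ψ x) (grad3 θ x))|) * |α x|)) • wstar x := by
  intro x hx
  have hmem : Ω ∈ nhds x := hΩopen.mem_nhds hx
  have hℓx : ContDiffAt ℝ 2 ℓ x := hℓ.contDiffAt hmem
  have hψx : ContDiffAt ℝ 2 ψ x := hψ.contDiffAt hmem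
  have hθx : ContDiffAt ℝ 2 θ x := hθ.contDiffAt hmem
  -- shorthand
  have hev : ∀ k : Fin 3, (fun y => wstar y k)
      =ᶠ[nhds x] (fun y => Real.sin (θ y) * pd k ψ y + Real.cos (θ y) * pd k ℓ y) := by
    intro k
    filter_upwards [hmem] with y hy
    rw [hwstar y hy]
    simp [grad3, Pi.add_apply, Pi.smul_apply, smul_eq_mul]
  have key : ∀ i k : Fin 3, pd i (fun y => wstar y k) x =
      Real.sin (θ x) * fderiv ℝ (fderiv ℝ ψ) x (Pi.single i 1) (Pi.single k 1)
      + pd k ψ x * (Real.cos (θ x) * pd i θ x)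
      + Real.cos (θ x) * fderiv ℝ (fderiv ℝ ℓ) x (Pi.single i 1) (Pi.single k 1)
      + pd k ℓ x * (-Real.sin (θ x) * pd i θ x) := by
    intro i k
    rw [pd_eventuallyEq (hev k) i]
    exact pdw hℓx hψx hθx i k
  -- linear algebra at the point x
  have hab := horth1 x hx
  have hac := horth2 x hx
  have hbc := horth3 x hx
  have hH := hjac x hx
  -- positivity of |∇ℓ|²
  have haa_pos : 0 < dot3 (grad3 ℓ x) (grad3 ℓ x) := by
    rcases (dot3_nonneg (grad3 ℓ x)).lt_or_eq with h | h
    · exact h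
    · exfalso; apply hH
      have h0 := dot3_eq_zero h.symm 0
      have h1 := dot3_eq_zero h.symm 1
      have h2 := dot3_eq_zero h.symm 2
      simp [dot3, h0, h1, h2]
  have haa_ne : dot3 (grad3 ℓ x) (grad3 ℓ x) ≠ 0 := ne_of_gt haa_pos
  -- |∇ψ|² = |∇ℓ|²
  have hbb : dot3 (grad3 ψ x) (grad3 ψ x) = dot3 (grad3 ℓ x) (grad3 ℓ x) := by
    have := hnorm x hx
    unfold norm3 at this
    exact ((Real.sqrt_inj (dot3_nonneg _) (dot3_nonneg _)).mp this).symm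
  -- |∇θ|² = α²
  have hcc : dot3 (grad3 θ x) (grad3 θ x) = (α x) ^ 2 := by
    have h1 := heik x hx
    unfold norm3 at h1
    have := Real.sq_sqrt (dot3_nonneg (grad3 θ x))
    rw [h1] at this
    rw [← this, sq_abs]
  -- α ≠ 0
  have hα_ne : |α x| ≠ 0 := by
    intro h0
    apply hH
    have hc0 : dot3 (grad3 θ x) (grad3 θ x) = 0 := by
      rw [hcc, ← sq_abs, h0]; ring
    have c0 := dot3_eq_zero hc0 0
    have c1 := dot3_eq_zero hc0 1
    have c2 := dot3_eq_zero hc0 2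
    simp [dot3, cross3, c0, c1, c2]
  -- notation for the Jacobian
  set H := dot3 (grad3 ℓ x) (cross3 (grad3 ψ x) (grad3 θ x)) with hHdef
  have hP1 := para3 (grad3 ℓ x) (grad3 ψ x) (grad3 θ x) hab hac
  have hba : dot3 (grad3 ψ x) (grad3 ℓ x) = 0 := by
    simp only [dot3] at hab ⊢; linarith
  have hP2' := para3 (grad3 ψ x) (grad3 θ x) (grad3 ℓ x) hbc hba
  have hdet : dot3 (grad3 ψ x) (cross3 (grad3 θ x) (grad3 ℓ x)) = H := by
    rw [hHdef]; exact detcyc3 (grad3 ℓ x) (grad3 ψ x) (grad3 θ x)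
  -- |H| = (a·a)|α|
  have habs : |H| = dot3 (grad3 ℓ x) (grad3 ℓ x) * |α x| := by
    have h2 := sqkey (dot3 (grad3 ℓ x) (grad3 ℓ x)) H
      (cross3 (grad3 ψ x) (grad3 θ x)) (grad3 ℓ x) hP1
    rw [lagrange3, hbb, hcc, hbc] at h2
    have h3 : ((dot3 (grad3 ℓ x) (grad3 ℓ x)) ^ 2 * (α x) ^ 2) * dot3 (grad3 ℓ x) (grad3 ℓ x)
        = H ^ 2 * dot3 (grad3 ℓ x) (grad3 ℓ x) := by linear_combination h2
    have h4 : H ^ 2 = (dot3 (grad3 ℓ x) (grad3 ℓ x) * |α x|) ^ 2 := by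
      have := mul_right_cancel₀ haa_ne h3
      rw [← this, mul_pow, sq_abs]
    have h5 : Real.sqrt (H ^ 2)
        = Real.sqrt ((dot3 (grad3 ℓ x) (grad3 ℓ x) * |α x|) ^ 2) := by rw [h4]
    rwa [Real.sqrt_sq_eq_abs, Real.sqrt_sq_eq_abs,
      abs_of_nonneg (by positivity : (0:ℝ) ≤ dot3 (grad3 ℓ x) (grad3 ℓ x) * |α x|)] at h5
  -- the proportionality factor
  have hlam : H / |H| * |α x| = H / dot3 (grad3 ℓ x) (grad3 ℓ x) := by
    rw [habs, div_mul_eq_mul_div, mul_comm (dot3 (grad3 ℓ x) (grad3 ℓ x)) |α x|,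
      ← div_div, mul_div_assoc, div_self hα_ne, mul_one]
  have E1 : ∀ i, cross3 (grad3 ψ x) (grad3 θ x) i
      = H / dot3 (grad3 ℓ x) (grad3 ℓ x) * grad3 ℓ x i := by
    intro i
    rw [div_mul_eq_mul_div, eq_div_iff haa_ne]
    linear_combination hP1 i
  have E2 : ∀ i, cross3 (grad3 θ x) (grad3 ℓ x) i
      = H / dot3 (grad3 ℓ x) (grad3 ℓ x) * grad3 ψ x i := by
    intro i
    rw [div_mul_eq_mul_div, eq_div_iff haa_ne]
    have := hP2' i
    rw [hbb, hdet] at this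
    linear_combination this
  -- assemble
  rw [hwstar x hx, hlam]
  have comp0 : curl3 wstar x 0 =
      ((-(H / dot3 (grad3 ℓ x) (grad3 ℓ x))) •
        (Real.sin (θ x) • grad3 ψ x + Real.cos (θ x) • grad3 ℓ x) : R3) 0 := by
    have f1 := E1 0; have f2 := E2 0
    simp only [cross3, grad3, Matrix.cons_val_zero] at f1 f2
    simp only [curl3, Matrix.cons_val_zero, Pi.add_apply, Pi.smul_apply, smul_eq_mul, grad3]
    rw [key 1 2, key 2 1]
    linear_combination Real.sin (θ x) * (pd_symm hψx 1 2) + Real.cos (θ x) * (pd_symm hℓx 1 2)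
      - Real.cos (θ x) * f1 - Real.sin (θ x) * f2
  have comp1 : curl3 wstar x 1 =
      ((-(H / dot3 (grad3 ℓ x) (grad3 ℓ x))) •
        (Real.sin (θ x) • grad3 ψ x + Real.cos (θ x) • grad3 ℓ x) : R3) 1 := by
    have f1 := E1 1; have f2 := E2 1
    simp only [cross3, grad3, Matrix.cons_val_one, Matrix.head_cons, Matrix.cons_val_zero] at f1 f2
    simp only [curl3, Matrix.cons_val_one, Matrix.head_cons, Matrix.cons_val_zero, Pi.add_apply, Pi.smul_apply,
      smul_eq_mul, grad3]
    rw [key 2 0, key 0 2]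
    linear_combination Real.sin (θ x) * (pd_symm hψx 2 0) + Real.cos (θ x) * (pd_symm hℓx 2 0)
      - Real.cos (θ x) * f1 - Real.sin (θ x) * f2
  have comp2 : curl3 wstar x 2 =
      ((-(H / dot3 (grad3 ℓ x) (grad3 ℓ x))) •
        (Real.sin (θ x) • grad3 ψ x + Real.cos (θ x) • grad3 ℓ x) : R3) 2 := by
    have f1 := E1 2; have f2 := E2 2
    simp only [cross3, grad3, Matrix.cons_val_two, Matrix.tail_cons, Matrix.head_cons] at f1 f2
    simp only [curl3, Matrix.cons_val_two, Matrix.tail_cons, Matrix.head_cons, Pi.add_apply,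
      Pi.smul_apply, smul_eq_mul, grad3]
    rw [key 0 1, key 1 0]
    linear_combination Real.sin (θ x) * (pd_symm hψx 0 1) + Real.cos (θ x) * (pd_symm hℓx 0 1)
      - Real.cos (θ x) * f1 - Real.sin (θ x) * f2
  funext i
  fin_cases i
  · exact comp0
  · exact comp1
  · exact comp2
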